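/- The normed ring (A_r, ‖·‖_r) is complete: every Cauchy sequence in A_r with respect to the metric induced by ‖·‖_r converges to an element of A_r. Hence A_r is a Banach ring. -/

import Mathlib

open Filter Topology

/-- The hybrid norm on `ℂ`: `‖z‖_hyb = max {1, |z|}` for `z ≠ 0`, and `‖0‖_hyb = 0`. -/
noncomputable def hybNorm (z : ℂ) : ℝ := if z = 0 then 0 else max 1 ‖z‖

/-- `f ∈ A_r`:  a formal Laurent series `f = Σ aₙ tⁿ ∈ ℂ((t))` belongs to `A_r` when
`Σₙ ‖aₙ‖_hyb rⁿ < ∞`. -/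
def memAr (r : ℝ) (f : LaurentSeries ℂ) : Prop :=
  Summable (fun n : ℤ => hybNorm (f.coeff n) * r ^ n)

/-- The norm `‖f‖_r = Σₙ ‖aₙ‖_hyb rⁿ` on `A_r`. -/
noncomputable def normAr (r : ℝ) (f : LaurentSeries ℂ) : ℝ :=
  ∑' n : ℤ, hybNorm (f.coeff n) * r ^ n

lemma hybNorm_nonneg (z : ℂ) : 0 ≤ hybNorm z := by
  unfold hybNorm; split
  · exact le_refl 0
  · exact le_trans zero_le_one (le_max_left _ _)

lemma abs_le_hybNorm (z : ℂ) : ‖z‖ ≤ hybNorm z := by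
  unfold hybNorm; split
  · simp_all
  · exact le_max_right _ _

lemma one_le_hybNorm {z : ℂ} (h : z ≠ 0) : 1 ≤ hybNorm z := by
  unfold hybNorm; rw [if_neg h]; exact le_max_left _ _

lemma hybNorm_sub_le (a b : ℂ) : hybNorm (a - b) ≤ hybNorm a + hybNorm b := by
  by_cases hab : a - b = 0
  · rw [hybNorm, if_pos hab]
    exact add_nonneg (hybNorm_nonneg a) (hybNorm_nonneg b)
  · have hone : 1 ≤ hybNorm a + hybNorm b := by
      by_cases ha : a = 0
      · have hb : b ≠ 0 := by intro hb; exact hab (by simp [ha, hb])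
        calc (1:ℝ) ≤ hybNorm b := one_le_hybNorm hb
        _ ≤ hybNorm a + hybNorm b := le_add_of_nonneg_left (hybNorm_nonneg a)
      · calc (1:ℝ) ≤ hybNorm a := one_le_hybNorm ha
        _ ≤ hybNorm a + hybNorm b := le_add_of_nonneg_right (hybNorm_nonneg b)
    rw [hybNorm, if_neg hab]
    refine max_le hone ?_
    calc ‖a - b‖ ≤ ‖a‖ + ‖b‖ := by
          simpa using norm_sub_le a b
    _ ≤ hybNorm a + hybNorm b := add_le_add (abs_le_hybNorm a) (abs_le_hybNorm b)

lemma termAr_nonneg {r : ℝ} (hr0 : 0 < r) (f : LaurentSeries ℂ) (n : ℤ) :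
    0 ≤ hybNorm (f.coeff n) * r ^ n :=
  mul_nonneg (hybNorm_nonneg _) (zpow_nonneg hr0.le n)

lemma memAr_sub {r : ℝ} (hr0 : 0 < r) {f g : LaurentSeries ℂ}
    (hf : memAr r f) (hg : memAr r g) : memAr r (f - g) := by
  refine Summable.of_nonneg_of_le (fun n => termAr_nonneg hr0 _ n)
    (fun n => ?_) (hf.add hg)
  rw [HahnSeries.coeff_sub]
  calc hybNorm (f.coeff n - g.coeff n) * r ^ n
      ≤ (hybNorm (f.coeff n) + hybNorm (g.coeff n)) * r ^ n :=
        mul_le_mul_of_nonneg_right (hybNorm_sub_le _ _) (zpow_nonneg hr0.le n)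
    _ = hybNorm (f.coeff n) * r ^ n + hybNorm (g.coeff n) * r ^ n := add_mul _ _ _

lemma term_le_normAr {r : ℝ} (hr0 : 0 < r) {f : LaurentSeries ℂ}
    (hf : memAr r f) (n : ℤ) : hybNorm (f.coeff n) * r ^ n ≤ normAr r f :=
  Summable.le_tsum hf n (fun m _ => termAr_nonneg hr0 f m)

lemma hyb_eventually_le {z : ℕ → ℂ} {w : ℂ} (h : Tendsto z atTop (𝓝 w))
    {δ : ℝ} (hδ : 0 < δ) : ∀ᶠ k in atTop, hybNorm w ≤ hybNorm (z k) + δ := by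
  by_cases hw : w = 0
  · filter_upwards with k
    rw [hw, hybNorm, if_pos rfl]
    exact add_nonneg (hybNorm_nonneg _) hδ.le
  · have hw0 : 0 < ‖w‖ := norm_pos_iff.mpr hw
    have hev : ∀ᶠ k in atTop, dist (z k) w < min δ ‖w‖ :=
      Metric.tendsto_nhds.mp h _ (lt_min hδ hw0)
    filter_upwards [hev] with k hk
    have hd : ‖w‖ - ‖z k‖ ≤ dist (z k) w := by
      rw [dist_comm, dist_eq_norm]
      exact norm_sub_norm_le _ _
    have hzk : z k ≠ 0 := by
      intro h0
      rw [h0] at hk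
      rw [h0, norm_zero, sub_zero] at hd
      exact absurd (lt_of_le_of_lt hd (lt_of_lt_of_le hk (min_le_right _ _)))
        (lt_irrefl _)
    have habs : ‖w‖ ≤ ‖z k‖ + δ := by
      have : ‖w‖ - ‖z k‖ < δ := lt_of_le_of_lt hd (lt_of_lt_of_le hk (min_le_left _ _))
      linarith
    rw [hybNorm, if_neg hw, hybNorm, if_neg hzk]
    refine max_le ?_ ?_
    · exact le_add_of_le_of_nonneg (le_max_left _ _) hδ.le
    · exact habs.trans (add_le_add_left (le_max_right _ _) δ)

lemma finsetSum_bound {r : ℝ} (hr0 : 0 < r) {H : ℕ → ℤ → ℂ} {h : ℤ → ℂ} {c : ℝ}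
    (hlim : ∀ n, Tendsto (fun k => H k n) atTop (𝓝 (h n)))
    (hbd : ∀ᶠ k in atTop, ∀ S : Finset ℤ, ∑ n ∈ S, hybNorm (H k n) * r ^ n ≤ c)
    (S : Finset ℤ) : ∑ n ∈ S, hybNorm (h n) * r ^ n ≤ c := by
  refine le_of_forall_pos_le_add (fun ε hε => ?_)
  set C : ℝ := ∑ n ∈ S, r ^ n with hC
  have hC0 : 0 ≤ C := Finset.sum_nonneg (fun n _ => zpow_nonneg hr0.le n)
  have hδ : 0 < ε / (C + 1) := div_pos hε (by linarith)
  have hev : ∀ᶠ k in atTop, ∀ n ∈ S, hybNorm (h n) ≤ hybNorm (H k n) + ε / (C + 1) :=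
    (eventually_all_finset S).2 (fun n _ => hyb_eventually_le (hlim n) hδ)
  obtain ⟨k, hk1, hk2⟩ := (hev.and hbd).exists
  calc ∑ n ∈ S, hybNorm (h n) * r ^ n
      ≤ ∑ n ∈ S, (hybNorm (H k n) + ε / (C + 1)) * r ^ n := by
        refine Finset.sum_le_sum (fun n hn => ?_)
        exact mul_le_mul_of_nonneg_right (hk1 n hn) (zpow_nonneg hr0.le n)
    _ = (∑ n ∈ S, hybNorm (H k n) * r ^ n) + (ε / (C + 1)) * C := by
        simp [add_mul, Finset.sum_add_distrib, Finset.mul_sum, hC]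
    _ ≤ c + (ε / (C + 1)) * C := add_le_add_left (hk2 S) _
    _ ≤ c + ε := by
        refine add_le_add_right ?_ c
        rw [div_mul_eq_mul_div, mul_comm]
        rw [div_le_iff₀ (by linarith : (0:ℝ) < C + 1)]
        nlinarith

/-- The normed ring `(A_r, ‖·‖_r)` is complete: every Cauchy sequence in `A_r` for the metric
induced by `‖·‖_r` converges to an element of `A_r`.  Hence `A_r` is a Banach ring. -/
theorem Ar_complete (r : ℝ) (hr0 : 0 < r) (hr1 : r < 1)
    (F : ℕ → LaurentSeries ℂ) (hF : ∀ k, memAr r (F k))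
    (hCauchy : ∀ ε : ℝ, 0 < ε → ∃ N : ℕ, ∀ m n : ℕ, N ≤ m → N ≤ n →
      normAr r (F m - F n) < ε) :
    ∃ g : LaurentSeries ℂ, memAr r g ∧
      Tendsto (fun k => normAr r (F k - g)) atTop (𝓝 0) := by
  have hsub : ∀ m k, memAr r (F m - F k) := fun m k => memAr_sub hr0 (hF m) (hF k)
  -- coefficientwise Cauchy
  have hcs : ∀ n : ℤ, CauchySeq (fun k => (F k).coeff n) := by
    intro n
    rw [Metric.cauchySeq_iff]
    intro ε hε
    have hrn : 0 < r ^ n := zpow_pos hr0 n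
    obtain ⟨N, hN⟩ := hCauchy (ε * r ^ n) (mul_pos hε hrn)
    refine ⟨N, fun m hm k hk => ?_⟩
    have h1 : ‖(F m - F k).coeff n‖ * r ^ n ≤ normAr r (F m - F k) :=
      le_trans (mul_le_mul_of_nonneg_right (abs_le_hybNorm _) hrn.le)
        (term_le_normAr hr0 (hsub m k) n)
    have h2 := lt_of_le_of_lt h1 (hN m k hm hk)
    rw [dist_eq_norm, ← HahnSeries.coeff_sub]
    exact lt_of_mul_lt_mul_right h2 hrn.le
  choose L hL using fun n => cauchySeq_tendsto_of_complete (hcs n)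
  -- uniform lower bound on supports
  obtain ⟨N₀, hN₀⟩ := hCauchy 1 one_pos
  set d : ℤ := min ((F N₀).order) 0 with hd
  have hd0 : d ≤ 0 := min_le_right _ _
  have hzero : ∀ k, N₀ ≤ k → ∀ n : ℤ, n < d → (F k).coeff n = 0 := by
    intro k hk n hn
    have hn0 : n ≤ 0 := le_of_lt (lt_of_lt_of_le hn hd0)
    have hNn : (F N₀).coeff n = 0 :=
      HahnSeries.coeff_eq_zero_of_lt_order (lt_of_lt_of_le hn (min_le_left _ _))
    by_contra hne
    have hdiff : (F k - F N₀).coeff n ≠ 0 := by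
      rw [HahnSeries.coeff_sub, hNn, sub_zero]; exact hne
    have hr1n : (1:ℝ) ≤ r ^ n := by
      have := zpow_le_zpow_right_of_le_one₀ hr0 hr1.le hn0
      simpa using this
    have h1 : (1:ℝ) ≤ hybNorm ((F k - F N₀).coeff n) * r ^ n := by
      calc (1:ℝ) = 1 * 1 := (one_mul 1).symm
        _ ≤ hybNorm _ * r ^ n :=
          mul_le_mul (one_le_hybNorm hdiff) hr1n zero_le_one (hybNorm_nonneg _)
    exact absurd (lt_of_le_of_lt (h1.trans (term_le_normAr hr0 (hsub k N₀) n))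
      (hN₀ k N₀ hk le_rfl)) (lt_irrefl _)
  have hLzero : ∀ n : ℤ, n < d → L n = 0 := by
    intro n hn
    refine tendsto_nhds_unique (hL n) ?_
    have hc : Tendsto (fun _ : ℕ => (0 : ℂ)) atTop (𝓝 0) := tendsto_const_nhds
    refine Tendsto.congr' ?_ hc
    filter_upwards [eventually_ge_atTop N₀] with k hk
    exact (hzero k hk n hn).symm
  -- the limit Laurent series
  have hsupp : (Function.support L).IsPWO := by
    refine Set.IsPWO.mono (Set.IsWF.isPWO ((bddBelow_Ici (a := d)).wellFoundedOn_lt)) ?_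
    intro n hn
    by_contra hnd
    exact hn (hLzero n (by simpa using hnd))
  set g : LaurentSeries ℂ := ⟨L, hsupp⟩ with hg
  -- key estimate
  have key : ∀ ε : ℝ, 0 < ε → ∃ N : ℕ, ∀ m, N ≤ m →
      memAr r (F m - g) ∧ normAr r (F m - g) ≤ ε := by
    intro ε hε
    obtain ⟨N, hN⟩ := hCauchy ε hε
    refine ⟨N, fun m hm => ?_⟩
    have hlim : ∀ n : ℤ, Tendsto (fun k => (F m - F k).coeff n) atTop
        (𝓝 ((F m - g).coeff n)) := by
      intro n
      simp only [HahnSeries.coeff_sub]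
      exact tendsto_const_nhds.sub (hL n)
    have hbd : ∀ᶠ k in atTop, ∀ S : Finset ℤ,
        ∑ n ∈ S, hybNorm ((F m - F k).coeff n) * r ^ n ≤ ε := by
      filter_upwards [eventually_ge_atTop N] with k hk S
      calc ∑ n ∈ S, hybNorm ((F m - F k).coeff n) * r ^ n
          ≤ normAr r (F m - F k) :=
            Summable.sum_le_tsum S (fun n _ => termAr_nonneg hr0 _ n) (hsub m k)
        _ ≤ ε := (hN m k hm hk).le
    have hfin := finsetSum_bound hr0 hlim hbd
    have hsummable : memAr r (F m - g) :=
      summable_of_sum_le (fun n => termAr_nonneg hr0 _ n) hfin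
    exact ⟨hsummable, Summable.tsum_le_of_sum_le hsummable hfin⟩
  -- membership of g
  obtain ⟨N₁, hN₁⟩ := key 1 one_pos
  have hgmem : memAr r g := by
    have h1 := (hN₁ N₁ le_rfl).1
    have h2 : g = F N₁ - (F N₁ - g) := (sub_sub_cancel (F N₁) g).symm
    rw [h2]
    exact memAr_sub hr0 (hF N₁) h1
  refine ⟨g, hgmem, ?_⟩
  rw [Metric.tendsto_atTop]
  intro ε hε
  obtain ⟨N, hN⟩ := key (ε / 2) (half_pos hε)
  refine ⟨N, fun k hk => ?_⟩
  obtain ⟨hmem, hle⟩ := hN k hk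
  have hnn : 0 ≤ normAr r (F k - g) := by
    unfold normAr
    exact tsum_nonneg fun n => termAr_nonneg hr0 _ n
  rw [Real.dist_eq, sub_zero, abs_of_nonneg hnn]
  exact lt_of_le_of_lt hle (half_lt_self hε)
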